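/- The ratio of the spike-era length probability to the BKL era length probability tends to log 2/log 3: lim_{n→∞} L(n)/K(n) = log 2/log 3, where K(n) = log₂((n+1)/(n+2)) - log₂(n/(n+1)) and L(n) = log₃((2n+1)/(2n+3)) - log₃((2n-1)/(2n+1)). -/

import Mathlib

open Filter

/-- Khinchin's distribution `K(n) = log₂((n+1)/(n+2)) - log₂(n/(n+1))`. -/
noncomputable def khinchin (n : ℕ) : ℝ :=
  Real.logb 2 ((n + 1) / (n + 2)) - Real.logb 2 (n / (n + 1))

/-- Spike-era length distribution `L(n) = log₃((2n+1)/(2n+3)) - log₃((2n-1)/(2n+1))`. -/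
noncomputable def spikeEraLen (n : ℕ) : ℝ :=
  Real.logb 3 ((2 * n + 1) / (2 * n + 3)) - Real.logb 3 (((2 * n : ℝ) - 1) / (2 * n + 1))

noncomputable def auxA (n : ℕ) : ℝ := ((2 * n + 1 : ℝ))^2 / (((2 * n : ℝ) - 1) * (2 * n + 3))
noncomputable def auxB (n : ℕ) : ℝ := ((n : ℝ) + 1)^2 / ((n : ℝ) * ((n : ℝ) + 2))

lemma slope_log_tendsto :
    Tendsto (fun x : ℝ => Real.log x / (x - 1)) (nhdsWithin 1 {(1:ℝ)}ᶜ) (nhds 1) := by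
  have h := Real.hasDerivAt_log (one_ne_zero)
  rw [hasDerivAt_iff_tendsto_slope] at h
  simpa [slope_fun_def, Real.log_one, div_eq_inv_mul] using h

lemma auxA_sub_one {n : ℕ} (hn : 1 ≤ n) :
    auxA n - 1 = 4 / (((2 * n : ℝ) - 1) * (2 * n + 3)) := by
  have hx : (1 : ℝ) ≤ (n : ℝ) := by exact_mod_cast hn
  have h1 : ((2 * n : ℝ) - 1) ≠ 0 := by nlinarith
  have h2 : ((2 * n : ℝ) + 3) ≠ 0 := by nlinarith
  unfold auxA
  field_simp
  ring

lemma auxB_sub_one {n : ℕ} (hn : 1 ≤ n) :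
    auxB n - 1 = 1 / ((n : ℝ) * ((n : ℝ) + 2)) := by
  have hx : (1 : ℝ) ≤ (n : ℝ) := by exact_mod_cast hn
  have h1 : (n : ℝ) ≠ 0 := by nlinarith
  have h2 : ((n : ℝ) + 2) ≠ 0 := by nlinarith
  unfold auxB
  field_simp
  ring

lemma spikeEraLen_eq {n : ℕ} (hn : 1 ≤ n) :
    spikeEraLen n = Real.log (auxA n) / Real.log 3 := by
  have hx : (1 : ℝ) ≤ (n : ℝ) := by exact_mod_cast hn
  have h1 : (0 : ℝ) < (2 * n : ℝ) - 1 := by nlinarith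
  have h2 : (0 : ℝ) < (2 * n : ℝ) + 1 := by nlinarith
  have h3 : (0 : ℝ) < (2 * n : ℝ) + 3 := by nlinarith
  unfold spikeEraLen auxA
  rw [Real.logb, Real.logb, div_sub_div_same]
  congr 1
  rw [Real.log_div (by positivity) (by positivity),
      Real.log_div h1.ne' h2.ne',
      Real.log_div (by positivity) (by positivity),
      Real.log_mul h1.ne' h3.ne', Real.log_pow]
  push_cast
  ring

lemma khinchin_eq {n : ℕ} (hn : 1 ≤ n) :
    khinchin n = Real.log (auxB n) / Real.log 2 := by
  have hx : (1 : ℝ) ≤ (n : ℝ) := by exact_mod_cast hn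
  have h1 : (0 : ℝ) < (n : ℝ) := by nlinarith
  have h2 : (0 : ℝ) < (n : ℝ) + 1 := by nlinarith
  have h3 : (0 : ℝ) < (n : ℝ) + 2 := by nlinarith
  unfold khinchin auxB
  rw [Real.logb, Real.logb, div_sub_div_same]
  congr 1
  rw [Real.log_div h2.ne' h3.ne', Real.log_div h1.ne' h2.ne',
      Real.log_div (by positivity) (by positivity),
      Real.log_mul h1.ne' h3.ne', Real.log_pow]
  push_cast
  ring

lemma denA_atTop : Tendsto (fun n : ℕ => (((2 * n : ℝ) - 1) * (2 * n + 3))) atTop atTop := by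
  apply Tendsto.atTop_mul_atTop₀
  · apply tendsto_atTop_add_const_right
    exact (tendsto_natCast_atTop_atTop (R := ℝ)).const_mul_atTop (by norm_num)
  · apply tendsto_atTop_add_const_right
    exact (tendsto_natCast_atTop_atTop (R := ℝ)).const_mul_atTop (by norm_num)

lemma denB_atTop : Tendsto (fun n : ℕ => ((n : ℝ) * ((n : ℝ) + 2))) atTop atTop := by
  apply Tendsto.atTop_mul_atTop₀
  · exact tendsto_natCast_atTop_atTop
  · exact tendsto_atTop_add_const_right _ _ tendsto_natCast_atTop_atTop

lemma auxA_tendsto : Tendsto auxA atTop (nhdsWithin 1 {(1:ℝ)}ᶜ) := by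
  apply tendsto_nhdsWithin_of_tendsto_nhds_of_eventually_within
  · have h0 : Tendsto (fun n : ℕ => (1 : ℝ) + 4 / (((2 * n : ℝ) - 1) * (2 * n + 3))) atTop
        (nhds (1 + 4 * 0)) := by
      apply tendsto_const_nhds.add
      simpa [div_eq_mul_inv] using (denA_atTop.inv_tendsto_atTop).const_mul (4:ℝ)
    rw [show ((1:ℝ) + 4 * 0) = 1 by norm_num] at h0
    apply h0.congr'
    filter_upwards [eventually_ge_atTop 1] with n hn
    have := auxA_sub_one hn
    linarith
  · filter_upwards [eventually_ge_atTop 1] with n hn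
    have hx : (1 : ℝ) ≤ (n : ℝ) := by exact_mod_cast hn
    have hden : (0:ℝ) < ((2 * n : ℝ) - 1) * (2 * n + 3) := by nlinarith
    have hpos : (0:ℝ) < 4 / (((2 * n : ℝ) - 1) * (2 * n + 3)) := div_pos (by norm_num) hden
    have := auxA_sub_one hn
    simp only [Set.mem_compl_iff, Set.mem_singleton_iff]
    intro h
    rw [h] at this
    linarith

lemma auxB_tendsto : Tendsto auxB atTop (nhdsWithin 1 {(1:ℝ)}ᶜ) := by
  apply tendsto_nhdsWithin_of_tendsto_nhds_of_eventually_within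
  · have h0 : Tendsto (fun n : ℕ => (1 : ℝ) + 1 / ((n : ℝ) * ((n : ℝ) + 2))) atTop
        (nhds (1 + 1 * 0)) := by
      apply tendsto_const_nhds.add
      simpa [div_eq_mul_inv] using (denB_atTop.inv_tendsto_atTop).const_mul (1:ℝ)
    rw [show ((1:ℝ) + 1 * 0) = 1 by norm_num] at h0
    apply h0.congr'
    filter_upwards [eventually_ge_atTop 1] with n hn
    have := auxB_sub_one hn
    linarith
  · filter_upwards [eventually_ge_atTop 1] with n hn
    have hx : (1 : ℝ) ≤ (n : ℝ) := by exact_mod_cast hn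
    have hpos : (0:ℝ) < 1 / ((n : ℝ) * ((n : ℝ) + 2)) := by positivity
    have := auxB_sub_one hn
    simp only [Set.mem_compl_iff, Set.mem_singleton_iff]
    intro h
    rw [h] at this
    linarith

lemma ratio_tendsto :
    Tendsto (fun n : ℕ => (auxA n - 1) / (auxB n - 1)) atTop (nhds 1) := by
  have h1 : Tendsto (fun n : ℕ => (1 : ℝ) / n) atTop (nhds 0) :=
    tendsto_one_div_atTop_nhds_zero_nat
  have h0 : Tendsto (fun n : ℕ => ((4 : ℝ) + 8 * (1/n)) / ((2 - 1/n) * (2 + 3 * (1/n)))) atTop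
      (nhds ((4 + 8 * 0) / ((2 - 0) * (2 + 3 * 0)))) := by
    apply Tendsto.div
    · exact tendsto_const_nhds.add (h1.const_mul 8)
    · exact (tendsto_const_nhds.sub h1).mul (tendsto_const_nhds.add (h1.const_mul 3))
    · norm_num
  rw [show ((4:ℝ) + 8 * 0) / ((2 - 0) * (2 + 3 * 0)) = 1 by norm_num] at h0
  apply h0.congr'
  filter_upwards [eventually_ge_atTop 1] with n hn
  have hx : (1 : ℝ) ≤ (n : ℝ) := by exact_mod_cast hn
  have hn0 : (n : ℝ) ≠ 0 := by nlinarith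
  have hd1 : ((2 * n : ℝ) - 1) ≠ 0 := by nlinarith
  have hd2 : ((2 * n : ℝ) + 3) ≠ 0 := by nlinarith
  have hd3 : ((n : ℝ) + 2) ≠ 0 := by nlinarith
  rw [auxA_sub_one hn, auxB_sub_one hn]
  field_simp
  ring


/-- `lim_{n→∞} L(n)/K(n) = log 2 / log 3`. -/
theorem spikeEraLen_div_khinchin_tendsto :
    Tendsto (fun n : ℕ => spikeEraLen n / khinchin n) atTop
      (nhds (Real.log 2 / Real.log 3)) := by
  have tA : Tendsto (fun n : ℕ => Real.log (auxA n) / (auxA n - 1)) atTop (nhds 1) :=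
    slope_log_tendsto.comp auxA_tendsto
  have tB : Tendsto (fun n : ℕ => Real.log (auxB n) / (auxB n - 1)) atTop (nhds 1) :=
    slope_log_tendsto.comp auxB_tendsto
  have tBi : Tendsto (fun n : ℕ => (Real.log (auxB n) / (auxB n - 1))⁻¹) atTop (nhds 1⁻¹) :=
    tB.inv₀ one_ne_zero
  have h0 : Tendsto (fun n : ℕ => (Real.log 2 / Real.log 3) *
      ((Real.log (auxA n) / (auxA n - 1)) * (Real.log (auxB n) / (auxB n - 1))⁻¹ *
        ((auxA n - 1) / (auxB n - 1)))) atTop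
      (nhds ((Real.log 2 / Real.log 3) * (1 * 1⁻¹ * 1))) :=
    Tendsto.const_mul _ ((tA.mul tBi).mul ratio_tendsto)
  rw [show (Real.log 2 / Real.log 3) * (1 * 1⁻¹ * 1) = Real.log 2 / Real.log 3 by norm_num] at h0
  apply h0.congr'
  filter_upwards [eventually_ge_atTop 1] with n hn
  have hx : (1 : ℝ) ≤ (n : ℝ) := by exact_mod_cast hn
  have hA1 : auxA n - 1 ≠ 0 := by
    have hden : (0:ℝ) < ((2 * n : ℝ) - 1) * (2 * n + 3) := by nlinarith
    rw [auxA_sub_one hn]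
    exact ne_of_gt (div_pos (by norm_num) hden)
  have hB1pos : (0:ℝ) < auxB n - 1 := by
    rw [auxB_sub_one hn]; positivity
  have hBgt : 1 < auxB n := by linarith
  have hlogB : Real.log (auxB n) ≠ 0 := ne_of_gt (Real.log_pos hBgt)
  have hlog3 : Real.log 3 ≠ 0 := ne_of_gt (Real.log_pos (by norm_num))
  rw [spikeEraLen_eq hn, khinchin_eq hn]
  field_simp
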